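/- Let L be a graph whose least adjacency eigenvalue satisfies λ_min(A(L)) ≥ −2 (e.g., L is a line graph). If L admits an orientation with symmetric H_{π/3}-spectrum, then the number of triangles of L satisfies t(L) ≤ 6·|E(L)|. -/

import Mathlib

open Matrix

lemma aux_trace_nonneg {m : Type*} [Fintype m] [DecidableEq m] {M : Matrix m m ℝ}
    (hM : M.PosSemidef) : 0 ≤ Matrix.trace M := by
  apply Finset.sum_nonneg
  intro i _
  have := hM.diag_nonneg (i := i)
  simpa [dotProduct, Pi.single_apply, mulVec, Finset.sum_ite_eq, Finset.sum_ite_eq'] using this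

lemma aux_trace_cube {m : Type*} [Fintype m] [DecidableEq m] {𝕜 : Type*} [RCLike 𝕜]
    {M : Matrix m m 𝕜} (hM : M.IsHermitian) :
    Matrix.trace (M * M * M) = ∑ i, ((hM.eigenvalues i : ℝ) : 𝕜) ^ 3 := by
  set U : Matrix m m 𝕜 := (hM.eigenvectorUnitary : Matrix m m 𝕜) with hU
  set D : Matrix m m 𝕜 := diagonal (RCLike.ofReal ∘ hM.eigenvalues) with hD
  have hUU : star U * U = 1 := mem_unitaryGroup_iff'.mp hM.eigenvectorUnitary.2
  have cancel : ∀ X : Matrix m m 𝕜, star U * (U * X) = X := fun X => by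
    rw [← mul_assoc, hUU, one_mul]
  have hspec : M = U * D * star U := hM.spectral_theorem
  have key : M * M * M = U * (D * D * D * star U) := by
    rw [hspec]
    simp only [mul_assoc]
    rw [cancel, cancel]
  rw [key, trace_mul_comm, mul_assoc, hUU, mul_one]
  rw [diagonal_mul_diagonal, diagonal_mul_diagonal, trace_diagonal]
  simp [pow_succ, mul_assoc]

lemma aux_posSemidef_shift {m : Type*} [Fintype m] [DecidableEq m] {M : Matrix m m ℝ}
    (hM : M.IsHermitian) (c : ℝ) (h : ∀ i, -c ≤ hM.eigenvalues i) :
    (M + c • (1 : Matrix m m ℝ)).PosSemidef := by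
  set U : Matrix m m ℝ := (hM.eigenvectorUnitary : Matrix m m ℝ) with hU
  have hUU : U * star U = 1 := mem_unitaryGroup_iff.mp hM.eigenvectorUnitary.2
  have key : M + c • (1 : Matrix m m ℝ)
      = U * diagonal (fun i => hM.eigenvalues i + c) * star U := by
    have hspec : M = U * diagonal (RCLike.ofReal ∘ hM.eigenvalues) * star U :=
      hM.spectral_theorem
    have h1 : (diagonal (fun i => hM.eigenvalues i + c) : Matrix m m ℝ)
        = diagonal (RCLike.ofReal ∘ hM.eigenvalues) + c • 1 := by
      rw [← diagonal_one, ← diagonal_smul, diagonal_add]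
      simp [Function.comp]
    rw [h1, mul_add, add_mul, ← hspec]
    congr 1
    rw [Matrix.mul_smul, smul_mul_assoc, mul_one, hUU]
  rw [key]
  have : (diagonal (fun i => hM.eigenvalues i + c) : Matrix m m ℝ).PosSemidef :=
    posSemidef_diagonal_iff.mpr (fun i => by linarith [h i])
  simpa [Matrix.star_eq_conjTranspose] using this.mul_mul_conjTranspose_same U

lemma aux_count (n : ℕ) (L : SimpleGraph (Fin n)) [DecidableRel L.Adj] :
    6 * (L.cliqueFinset 3).card ≤
      (Finset.univ.filter (fun p : Fin n × Fin n × Fin n =>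
        L.Adj p.1 p.2.1 ∧ L.Adj p.2.1 p.2.2 ∧ L.Adj p.2.2 p.1)).card := by
  classical
  set T := (Finset.univ.filter (fun p : Fin n × Fin n × Fin n =>
        L.Adj p.1 p.2.1 ∧ L.Adj p.2.1 p.2.2 ∧ L.Adj p.2.2 p.1)) with hT
  have hmap : ∀ p ∈ T, ({p.1, p.2.1, p.2.2} : Finset (Fin n)) ∈ L.cliqueFinset 3 := by
    intro p hp
    rw [hT, Finset.mem_filter] at hp
    obtain ⟨-, h1, h2, h3⟩ := hp
    rw [SimpleGraph.mem_cliqueFinset_iff]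
    exact SimpleGraph.is3Clique_triple_iff.mpr ⟨h1, h3.symm, h2⟩
  rw [Finset.card_eq_sum_card_fiberwise hmap]
  have key : ∀ s ∈ L.cliqueFinset 3, 6 ≤
      (T.filter (fun p : Fin n × Fin n × Fin n =>
        ({p.1, p.2.1, p.2.2} : Finset (Fin n)) = s)).card := by
    intro s hs
    rw [SimpleGraph.mem_cliqueFinset_iff] at hs
    obtain ⟨a, b, c, hab, hac, hbc, rfl⟩ := Finset.card_eq_three.mp hs.card_eq
    obtain ⟨Aab, Aac, Abc⟩ := SimpleGraph.is3Clique_triple_iff.mp hs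
    have Aba := Aab.symm
    have Aca := Aac.symm
    have Acb := Abc.symm
    set v : Fin 3 → Fin n := ![a, b, c] with hv
    have e0 : v 0 = a := rfl
    have e1 : v 1 = b := rfl
    have e2 : v 2 = c := rfl
    have hvinj : Function.Injective v := by
      intro x y h
      fin_cases x <;> fin_cases y <;> simp_all [hv, Matrix.cons_val_zero, Matrix.cons_val_one,
        Matrix.head_cons, Matrix.cons_val_two, Matrix.tail_cons]
    have hvadj : ∀ x y : Fin 3, x ≠ y → L.Adj (v x) (v y) := by
      intro x y h
      fin_cases x <;> fin_cases y <;>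
        simp_all [hv, Matrix.cons_val_zero, Matrix.cons_val_one,
          Matrix.head_cons, Matrix.cons_val_two, Matrix.tail_cons]
    have hvset : ∀ σ : Equiv.Perm (Fin 3),
        ({v (σ 0), v (σ 1), v (σ 2)} : Finset (Fin n)) = {a, b, c} := by
      intro σ
      have h1 : ({σ 0, σ 1, σ 2} : Finset (Fin 3)) = Finset.univ := by
        apply Finset.eq_univ_of_card
        rw [Finset.card_insert_of_notMem, Finset.card_insert_of_notMem,
          Finset.card_singleton]
        · rfl
        · simp [σ.injective.ne (by decide : (1 : Fin 3) ≠ 2)]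
        · simp [σ.injective.ne (by decide : (0 : Fin 3) ≠ 1),
            σ.injective.ne (by decide : (0 : Fin 3) ≠ 2)]
      have h2 : ({v (σ 0), v (σ 1), v (σ 2)} : Finset (Fin n))
          = Finset.image v {σ 0, σ 1, σ 2} := by
        simp [Finset.image_insert]
      rw [h2, h1]
      rw [show (Finset.univ : Finset (Fin 3)) = {0, 1, 2} by decide]
      simp [Finset.image_insert, e0, e1, e2]
    have hmem : ∀ σ : Equiv.Perm (Fin 3), (v (σ 0), v (σ 1), v (σ 2)) ∈
        T.filter (fun p : Fin n × Fin n × Fin n =>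
          ({p.1, p.2.1, p.2.2} : Finset (Fin n)) = {a, b, c}) := by
      intro σ
      rw [Finset.mem_filter, hT, Finset.mem_filter]
      refine ⟨⟨Finset.mem_univ _, ?_, ?_, ?_⟩, hvset σ⟩
      · exact hvadj _ _ (fun h => (by decide : (0:Fin 3) ≠ 1) (σ.injective h))
      · exact hvadj _ _ (fun h => (by decide : (1:Fin 3) ≠ 2) (σ.injective h))
      · exact hvadj _ _ (fun h => (by decide : (2:Fin 3) ≠ 0) (σ.injective h))
    have hcard : (6 : ℕ) = (Finset.univ : Finset (Equiv.Perm (Fin 3))).card := by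
      rw [Finset.card_univ]
      simp [Fintype.card_perm]
      rfl
    rw [hcard]
    apply Finset.card_le_card_of_injOn (fun σ : Equiv.Perm (Fin 3) =>
      (v (σ 0), v (σ 1), v (σ 2)))
    · intro σ _; exact hmem σ
    · intro σ _ τ _ h
      simp only [Prod.mk.injEq] at h
      obtain ⟨h0, h1, h2⟩ := h
      ext i
      fin_cases i
      · exact congrArg (fun x => (x : Fin 3).val) (hvinj h0) ▸ rfl
      · exact congrArg (fun x => (x : Fin 3).val) (hvinj h1) ▸ rfl
      · exact congrArg (fun x => (x : Fin 3).val) (hvinj h2) ▸ rfl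
  calc 6 * (L.cliqueFinset 3).card = ∑ _s ∈ L.cliqueFinset 3, 6 := by
        rw [Finset.sum_const, smul_eq_mul, mul_comm]
    _ ≤ _ := Finset.sum_le_sum key

lemma aux_expand {m : Type*} [Fintype m] (a b : ℂ) (X Y : Matrix m m ℂ) :
    Matrix.trace ((a•X + b•Y)*(a•X + b•Y)*(a•X + b•Y)) =
      a^3 * Matrix.trace (X*X*X) + 3*a^2*b*Matrix.trace (X*X*Y)
      + 3*a*b^2*Matrix.trace (X*Y*Y) + b^3*Matrix.trace (Y*Y*Y) := by
  simp only [Matrix.add_mul, Matrix.mul_add, smul_mul_assoc, mul_smul_comm, trace_add,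
    trace_smul, smul_eq_mul]
  rw [trace_mul_cycle Y X X, trace_mul_cycle X Y X, trace_mul_cycle Y X Y, trace_mul_cycle Y Y X]
  ring

lemma aux_re (w T P Q R : ℝ) (hw : w^2 = 3/4)
    (E : (0:ℂ) = (1/2:ℂ)^3 * (T:ℂ) + 3*(1/2:ℂ)^2*(Complex.I*(w:ℂ))*(P:ℂ)
      + 3*(1/2:ℂ)*(Complex.I*(w:ℂ))^2*(Q:ℂ) + (Complex.I*(w:ℂ))^3*(R:ℂ)) : T = 9*Q := by
  have hE2 : (0:ℂ) = ((1/8*T - 3/2*(w^2)*Q : ℝ) : ℂ)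
      + Complex.I * ((3/4*w*P - w^2*w*R : ℝ) : ℂ) := by
    have hI3 : Complex.I^3 = -Complex.I := by
      rw [pow_succ, Complex.I_sq]; ring
    rw [E]; push_cast; ring_nf
    rw [hI3, Complex.I_sq]; ring
  rw [hw] at hE2
  have := congrArg Complex.re hE2
  simp [Complex.add_re, Complex.mul_re, Complex.ofReal_re, Complex.ofReal_im] at this
  linarith

lemma aux_trace_count (n : ℕ) (L : SimpleGraph (Fin n)) [DecidableRel L.Adj] :
    Matrix.trace (L.adjMatrix ℝ * L.adjMatrix ℝ * L.adjMatrix ℝ)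
      = ((Finset.univ.filter (fun p : Fin n × Fin n × Fin n =>
        L.Adj p.1 p.2.1 ∧ L.Adj p.2.1 p.2.2 ∧ L.Adj p.2.2 p.1)).card : ℝ) := by
  classical
  rw [← Finset.sum_boole]
  rw [Fintype.sum_prod_type]
  have h1 : Matrix.trace (L.adjMatrix ℝ * L.adjMatrix ℝ * L.adjMatrix ℝ)
      = ∑ i, ∑ j, ∑ k, L.adjMatrix ℝ i j * (L.adjMatrix ℝ j k * L.adjMatrix ℝ k i) := by
    simp only [Matrix.trace, Matrix.diag, Matrix.mul_apply, Finset.sum_mul, Finset.mul_sum]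
    apply Finset.sum_congr rfl; intro i _
    rw [Finset.sum_comm]
    apply Finset.sum_congr rfl; intro j _
    apply Finset.sum_congr rfl; intro k _
    ring
  rw [h1]
  apply Finset.sum_congr rfl; intro i _
  rw [Fintype.sum_prod_type]
  apply Finset.sum_congr rfl; intro j _
  apply Finset.sum_congr rfl; intro k _
  by_cases hij : L.Adj i j <;> by_cases hjk : L.Adj j k <;> by_cases hki : L.Adj k i <;>
    simp [hij, hjk, hki]

/-- If a graph `L` whose least adjacency eigenvalue is at least `-2` (e.g. a
line graph) admits an orientation with symmetric `H_{π/3}`-spectrum, then its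
number of triangles satisfies `t(L) ≤ 6 |E(L)|`. -/
theorem stmt_15 (n : ℕ) (L : SimpleGraph (Fin n)) [DecidableRel L.Adj]
    (hA : (L.adjMatrix ℝ).IsHermitian)
    (hmin : ∀ i, -2 ≤ hA.eigenvalues i)
    (arc : Fin n → Fin n → Prop) [DecidableRel arc]
    (hasym : ∀ u v, arc u v → ¬ arc v u)
    (horient : ∀ u v, L.Adj u v ↔ (arc u v ∨ arc v u))
    (H : Matrix (Fin n) (Fin n) ℂ)
    (hH : ∀ u v, H u v =
      if arc u v then Complex.exp ((Real.pi / 3 : ℝ) * Complex.I)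
      else if arc v u then Complex.exp (-((Real.pi / 3 : ℝ) * Complex.I)) else 0)
    (hHerm : H.IsHermitian)
    (hsym : ∃ σ : Equiv.Perm (Fin n), ∀ i, hHerm.eigenvalues (σ i) = - hHerm.eigenvalues i) :
    (L.cliqueFinset 3).card ≤ 6 * L.edgeFinset.card := by
  classical
  set A : Matrix (Fin n) (Fin n) ℝ := L.adjMatrix ℝ with hAdef
  set S : Matrix (Fin n) (Fin n) ℝ :=
    Matrix.of (fun u v => if arc u v then 1 else if arc v u then -1 else 0) with hSdef
  have hSapply : ∀ u v, S u v = if arc u v then 1 else if arc v u then -1 else 0 :=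
    fun u v => rfl
  have hST : Sᵀ = -S := by
    ext u v
    simp only [Matrix.transpose_apply, Matrix.neg_apply, hSapply]
    by_cases ha1 : arc u v
    · simp [ha1, hasym u v ha1]
    · by_cases ha2 : arc v u <;> simp [ha1, ha2]
  set w : ℝ := Real.sqrt 3 / 2 with hwdef
  have hw : w ^ 2 = 3 / 4 := by
    rw [hwdef, div_pow, Real.sq_sqrt (by norm_num : (3:ℝ) ≥ 0)]
    norm_num
  -- decomposition of H
  have hHdec : H = (1/2 : ℂ) • (A.map Complex.ofReal)
      + (Complex.I * (w : ℂ)) • (S.map Complex.ofReal) := by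
    ext u v
    rw [hH u v]
    simp only [Matrix.add_apply, Matrix.smul_apply, Matrix.map_apply, smul_eq_mul]
    have e1 : Complex.exp ((Real.pi/3 : ℝ) * Complex.I) = (1/2 : ℂ) + Complex.I * (w : ℂ) := by
      rw [Complex.exp_mul_I, ← Complex.ofReal_cos, ← Complex.ofReal_sin,
        Real.cos_pi_div_three, Real.sin_pi_div_three]
      push_cast [hwdef]
      ring
    have e2 : Complex.exp (-((Real.pi/3 : ℝ) * Complex.I))
        = (1/2 : ℂ) - Complex.I * (w : ℂ) := by
      rw [show -((Real.pi/3 : ℝ) * Complex.I) = ((-(Real.pi/3) : ℝ) : ℂ) * Complex.I by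
        push_cast; ring]
      rw [Complex.exp_mul_I, ← Complex.ofReal_cos, ← Complex.ofReal_sin,
        Real.cos_neg, Real.sin_neg, Real.cos_pi_div_three, Real.sin_pi_div_three]
      push_cast [hwdef]
      ring
    by_cases h1 : arc u v
    · have hadj : L.Adj u v := (horient u v).mpr (Or.inl h1)
      rw [if_pos h1, e1]
      simp only [hAdef, SimpleGraph.adjMatrix_apply, hSapply, if_pos hadj, if_pos h1]
      push_cast
      ring
    · by_cases h2 : arc v u
      · have hadj : L.Adj u v := (horient u v).mpr (Or.inr h2)
        rw [if_neg h1, if_pos h2, e2]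
        simp only [hAdef, SimpleGraph.adjMatrix_apply, hSapply, if_pos hadj, if_neg h1,
          if_pos h2]
        push_cast
        ring
      · have hnadj : ¬ L.Adj u v := by
          intro h
          rcases (horient u v).mp h with h' | h'
          exacts [h1 h', h2 h']
        rw [if_neg h1, if_neg h2]
        simp only [hAdef, SimpleGraph.adjMatrix_apply, hSapply, if_neg hnadj, if_neg h1,
          if_neg h2]
        push_cast
        ring
  -- trace of H^3 vanishes
  have hH3 : Matrix.trace (H * H * H) = 0 := by
    rw [aux_trace_cube hHerm]
    obtain ⟨σ, hσ⟩ := hsym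
    have hr : ∑ i, (hHerm.eigenvalues i)^3 = 0 := by
      have h1 : ∑ i, (hHerm.eigenvalues (σ i))^3 = ∑ i, (hHerm.eigenvalues i)^3 :=
        Equiv.sum_comp σ (fun i => (hHerm.eigenvalues i)^3)
      have h2 : ∑ i, (hHerm.eigenvalues (σ i))^3 = -∑ i, (hHerm.eigenvalues i)^3 := by
        rw [← Finset.sum_neg_distrib]
        apply Finset.sum_congr rfl
        intro i _
        rw [hσ i]
        ring
      linarith
    have h0 : (∑ i, ((hHerm.eigenvalues i : ℝ) : ℂ)^3)
        = ((∑ i, (hHerm.eigenvalues i)^3 : ℝ) : ℂ) := by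
      norm_cast
    have h1 : ((∑ i, (hHerm.eigenvalues i)^3 : ℝ) : ℂ) = 0 := by
      rw [hr]
      simp
    exact h0.trans h1
  -- map helpers
  have htrmap : ∀ X : Matrix (Fin n) (Fin n) ℝ,
      Matrix.trace (X.map Complex.ofReal) = ((Matrix.trace X : ℝ) : ℂ) := by
    intro X
    simp [Matrix.trace, Matrix.map_apply, Matrix.diag]
  have hmapmul : ∀ X Y : Matrix (Fin n) (Fin n) ℝ,
      (X.map Complex.ofReal) * (Y.map Complex.ofReal) = (X*Y).map Complex.ofReal := by
    intro X Y
    exact (Matrix.map_mul (f := Complex.ofRealHom)).symm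
  -- the key identity trace(A^3) = 9 trace(A S S)
  set T3 : ℝ := Matrix.trace (A*A*A) with hT3
  set P : ℝ := Matrix.trace (A*A*S) with hP
  set Q : ℝ := Matrix.trace (A*S*S) with hQ
  set R : ℝ := Matrix.trace (S*S*S) with hR
  have hkey : T3 = 9 * Q := by
    apply aux_re w T3 P Q R hw
    have hex := aux_expand (1/2 : ℂ) (Complex.I * (w : ℂ))
      (A.map Complex.ofReal) (S.map Complex.ofReal)
    rw [← hHdec, hH3] at hex
    simp only [hmapmul, htrmap] at hex
    rw [← hT3, ← hP, ← hQ, ← hR] at hex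
    exact hex
  -- the PSD inequality : Q ≤ 2 * trace (S * Sᵀ)
  have hpsd : (A + (2:ℝ) • (1 : Matrix (Fin n) (Fin n) ℝ)).PosSemidef :=
    aux_posSemidef_shift hA 2 hmin
  have hSpsd : (Sᵀ * (A + (2:ℝ) • 1) * S).PosSemidef := by
    have := hpsd.conjTranspose_mul_mul_same S
    rwa [conjTranspose_eq_transpose_of_trivial] at this
  have htr1 : 0 ≤ Matrix.trace (Sᵀ * (A + (2:ℝ) • 1) * S) := aux_trace_nonneg hSpsd
  have htr2 : Matrix.trace (Sᵀ * (A + (2:ℝ) • 1) * S)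
      = -Q + 2 * Matrix.trace (S * Sᵀ) := by
    rw [trace_mul_cycle]
    rw [Matrix.mul_add, trace_add]
    have e1 : Matrix.trace (S * Sᵀ * A) = -Q := by
      rw [hST, Matrix.mul_neg, Matrix.neg_mul, trace_neg, trace_mul_cycle, hQ]
    have e2 : Matrix.trace (S * Sᵀ * ((2:ℝ) • 1)) = 2 * Matrix.trace (S * Sᵀ) := by
      rw [Matrix.mul_smul, mul_one, trace_smul]
      simp
    rw [e1, e2]
  -- trace (S * Sᵀ) = 2 |E|
  have hSS : Matrix.trace (S * Sᵀ) = ((2 * L.edgeFinset.card : ℕ) : ℝ) := by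
    have h1 : Matrix.trace (S * Sᵀ) = ∑ i, ∑ j, S i j * S i j := by
      simp [Matrix.trace, Matrix.diag, Matrix.mul_apply, Matrix.transpose_apply]
    rw [h1]
    have h2 : ∀ i j : Fin n, S i j * S i j = if L.Adj i j then (1:ℝ) else 0 := by
      intro i j
      rw [hSapply]
      by_cases hij : arc i j
      · simp [hij, (horient i j).mpr (Or.inl hij)]
      · by_cases hji : arc j i
        · simp [hij, hji, (horient i j).mpr (Or.inr hji)]
        · have hn : ¬ L.Adj i j := by
            intro h
            rcases (horient i j).mp h with h' | h'
            exacts [hij h', hji h']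
          simp [hij, hji, hn]
    simp_rw [h2]
    have h3 : ∀ i : Fin n, ∑ j, (if L.Adj i j then (1:ℝ) else 0) = (L.degree i : ℝ) := by
      intro i
      rw [Finset.sum_boole]
      congr 1
      rw [SimpleGraph.degree]
      congr 1
      ext j
      simp [SimpleGraph.mem_neighborFinset]
    simp_rw [h3]
    rw [← Nat.cast_sum, SimpleGraph.sum_degrees_eq_twice_card_edges]
  -- put everything together
  have hQle : Q ≤ 2 * ((2 * L.edgeFinset.card : ℕ) : ℝ) := by
    rw [htr2, hSS] at htr1
    linarith
  have hcount : ((6 * (L.cliqueFinset 3).card : ℕ) : ℝ) ≤ T3 := by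
    have h1 := aux_count n L
    have h2 := aux_trace_count n L
    rw [hT3, hAdef, h2]
    exact_mod_cast h1
  have hfinal : ((L.cliqueFinset 3).card : ℝ) ≤ ((6 * L.edgeFinset.card : ℕ) : ℝ) := by
    push_cast at hcount hQle ⊢
    nlinarith [hkey]
  exact_mod_cast hfinal
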